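/- arXiv:1202.4425 — 3 statements merged into one kernel-verified Lean document; each statement's English description precedes it below -/
import Mathlib

section
/- Let n ≥ 1 and ε ≥ 0. Let W be a random variable uniformly distributed on a nonempty finite set 𝒲, let X_SD = (X_{SD,1},…,X_{SD,n}) and Y₁ = (Y_{1,1},…,Y_{1,n}) be random vectors with finite-valued coordinates, and let X_SR, Y₂ be finite-valued random variables, all on a common probability space. Assume: (i) H(W | (Y₁, Y₂)) ≤ n·ε (Fano condition); (ii) Y₁ is conditionally independent of (Y₂, W) given X_SD; (iii) Y₂ is conditionally independent of W given X_SR; (iv) for every i, Y_{1,i} is conditionally independent of ((X_{SD,j})_{j≠i}, (Y_{1,j})_{j<i}) given X_{SD,i} (memoryless S–D channel). Then log |𝒲| ≤ Σ_{i=1}^{n} I(X_{SD,i}; Y_{1,i}) + I(X_SR; Y₂) + n·ε. -/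
open MeasureTheory Real

noncomputable section

namespace InterferenceRelay

variable {Ω : Type*} [MeasurableSpace Ω]

/-- The probability `P(X = x)` of a random variable `X` taking the value `x`. -/
def pr (μ : Measure Ω) {α : Type*} (X : Ω → α) (x : α) : ℝ :=
  (μ {ω | X ω = x}).toReal

/-- Shannon entropy `H(X)` (natural logarithm) of a finite-valued random variable. -/
def ent (μ : Measure Ω) {α : Type*} [Fintype α] (X : Ω → α) : ℝ :=
  ∑ x : α, Real.negMulLog (pr μ X x)

/-- Conditional entropy `H(X | Y) = H(X, Y) - H(Y)`. -/
def condEnt (μ : Measure Ω) {α β : Type*} [Fintype α] [Fintype β]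
    (X : Ω → α) (Y : Ω → β) : ℝ :=
  ent μ (fun ω => (X ω, Y ω)) - ent μ Y

/-- Mutual information `I(X ; Y) = H(X) - H(X | Y)`. -/
def mutInfo (μ : Measure Ω) {α β : Type*} [Fintype α] [Fintype β]
    (X : Ω → α) (Y : Ω → β) : ℝ :=
  ent μ X - condEnt μ X Y

/-- Conditional mutual information `I(X ; Y | Z) = H(X | Z) - H(X | (Y, Z))`. -/
def condMutInfo (μ : Measure Ω) {α β γ : Type*} [Fintype α] [Fintype β] [Fintype γ]
    (X : Ω → α) (Y : Ω → β) (Z : Ω → γ) : ℝ :=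
  condEnt μ X Z - condEnt μ X (fun ω => (Y ω, Z ω))

/-- `Y` is conditionally independent of `Z` given `X`, i.e. the Markov chain `Z − X − Y`
holds: `P(X = x, Y = y, Z = z) ⬝ P(X = x) = P(X = x, Y = y) ⬝ P(X = x, Z = z)`
for all values `x, y, z`. -/
def CondIndepGiven (μ : Measure Ω) {α β γ : Type*}
    (Y : Ω → β) (Z : Ω → γ) (X : Ω → α) : Prop :=
  ∀ (x : α) (y : β) (z : γ),
    μ {ω | X ω = x ∧ Y ω = y ∧ Z ω = z} * μ {ω | X ω = x} =
      μ {ω | X ω = x ∧ Y ω = y} * μ {ω | X ω = x ∧ Z ω = z}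

set_option linter.unusedSectionVars false

section Aux
variable (μ : Measure Ω) [IsProbabilityMeasure μ]

lemma pr_nonneg {ι : Type*} (Z : Ω → ι) (v : ι) : 0 ≤ pr μ Z v := ENNReal.toReal_nonneg

lemma pr_mono {ι κ : Type*} {Z : Ω → ι} {T : Ω → κ} {v : ι} {w : κ}
    (h : ∀ ω, Z ω = v → T ω = w) : pr μ Z v ≤ pr μ T w := by
  refine ENNReal.toReal_mono (measure_ne_top μ _) (measure_mono ?_)
  exact fun ω hω => h ω hω

lemma pr_comp {ι κ : Type*} [Fintype ι] [DecidableEq κ] {Z : Ω → ι}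
    (hZ : ∀ v, MeasurableSet {ω | Z ω = v}) (g : ι → κ) (c : κ) :
    pr μ (fun ω => g (Z ω)) c = ∑ v ∈ Finset.univ.filter (fun v => g v = c), pr μ Z v := by
  classical
  have hset : {ω | g (Z ω) = c} = ⋃ v ∈ Finset.univ.filter (fun v => g v = c), {ω | Z ω = v} := by
    ext ω
    simp only [Set.mem_setOf_eq, Set.mem_iUnion, Finset.mem_filter, Finset.mem_univ, true_and]
    exact ⟨fun h => ⟨Z ω, h, rfl⟩, fun ⟨v, hv, hzv⟩ => hzv ▸ hv⟩
  have hdisj : Set.PairwiseDisjoint (↑(Finset.univ.filter (fun v => g v = c)))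
      (fun v => {ω | Z ω = v}) := by
    intro a _ b _ hab
    refine Set.disjoint_left.2 fun ω ha hb => hab ?_
    rw [← ha, ← hb]
  rw [pr, hset, measure_biUnion_finset hdisj (fun v _ => hZ v),
    ENNReal.toReal_sum (fun v _ => measure_ne_top μ _)]
  rfl

lemma sum_pr {ι : Type*} [Fintype ι] {Z : Ω → ι}
    (hZ : ∀ v, MeasurableSet {ω | Z ω = v}) : ∑ v, pr μ Z v = 1 := by
  classical
  have h := pr_comp μ hZ (fun _ => (() : Unit)) ()
  have h1 : pr μ (fun _ : Ω => ()) () = 1 := by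
    simp [pr, Set.setOf_true]
  rw [h1] at h
  rw [h]
  apply Finset.sum_congr
  · ext v; simp
  · intros; rfl

lemma sum_pr_mul {ι κ : Type*} [Fintype ι] [Fintype κ] {Z : Ω → ι}
    (hZ : ∀ v, MeasurableSet {ω | Z ω = v}) (g : ι → κ) (φ : κ → ℝ) :
    ∑ v, pr μ Z v * φ (g v) = ∑ c, pr μ (fun ω => g (Z ω)) c * φ c := by
  classical
  rw [← Finset.sum_fiberwise_of_maps_to (fun v _ => Finset.mem_univ (g v))
    (fun v => pr μ Z v * φ (g v))]
  refine Finset.sum_congr rfl fun c _ => ?_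
  rw [pr_comp μ hZ g c, Finset.sum_mul]
  refine Finset.sum_congr rfl fun v hv => ?_
  rw [(Finset.mem_filter.1 hv).2]

end Aux
section Aux2
variable (μ : Measure Ω) [IsProbabilityMeasure μ]

/-- The negative entropy sum `∑ p log p`. -/
def L (μ : Measure Ω) {ι : Type*} [Fintype ι] (Z : Ω → ι) : ℝ :=
  ∑ v, pr μ Z v * Real.log (pr μ Z v)

lemma gibbs_pointwise {p q : ℝ} (hp : 0 ≤ p) (hq : 0 ≤ q) (h0 : q = 0 → p = 0) :
    p * Real.log q - p * Real.log p ≤ q - p := by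
  rcases eq_or_lt_of_le hp with h | hp'
  · simp [← h, hq]
  · have hq' : 0 < q := by
      rcases eq_or_lt_of_le hq with h' | h'
      · exact absurd (h0 h'.symm) (ne_of_gt hp')
      · exact h'
    have := Real.log_le_sub_one_of_pos (show 0 < q / p from div_pos hq' hp')
    have hlog : Real.log (q / p) = Real.log q - Real.log p := Real.log_div (ne_of_gt hq') (ne_of_gt hp')
    rw [hlog] at this
    calc p * Real.log q - p * Real.log p = p * (Real.log q - Real.log p) := by ring
    _ ≤ p * (q / p - 1) := by
        apply mul_le_mul_of_nonneg_left this hp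
    _ = q - p := by field_simp

lemma gibbs {ι : Type*} [Fintype ι] (a b : ι → ℝ) (ha : ∀ i, 0 ≤ a i) (hb : ∀ i, 0 ≤ b i)
    (h0 : ∀ i, b i = 0 → a i = 0) (hs : ∑ i, b i ≤ ∑ i, a i) :
    ∑ i, a i * Real.log (b i) ≤ ∑ i, a i * Real.log (a i) := by
  have h := Finset.sum_le_sum (fun i (_ : i ∈ Finset.univ) =>
    gibbs_pointwise (ha i) (hb i) (h0 i))
  rw [Finset.sum_sub_distrib, Finset.sum_sub_distrib] at h
  linarith

lemma pr_comp_inj {ι κ : Type*} {Z : Ω → ι} {g : ι → κ} (hg : Function.Injective g) (v : ι) :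
    pr μ (fun ω => g (Z ω)) (g v) = pr μ Z v := by
  have : {ω | g (Z ω) = g v} = {ω | Z ω = v} := by
    ext ω
    exact ⟨fun h => hg h, fun h => by rw [Set.mem_setOf_eq] at h ⊢; rw [h]⟩
  unfold pr
  rw [this]

lemma pr_comp_not_range {ι κ : Type*} {Z : Ω → ι} {g : ι → κ} {c : κ}
    (hc : ∀ v, g v ≠ c) : pr μ (fun ω => g (Z ω)) c = 0 := by
  unfold pr
  convert ENNReal.toReal_zero
  convert measure_empty (μ := μ)
  ext ω
  simp only [Set.mem_setOf_eq, Set.mem_empty_iff_false, iff_false]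
  exact hc (Z ω)

lemma L_comp_inj {ι κ : Type*} [Fintype ι] [Fintype κ] {Z : Ω → ι} {g : ι → κ}
    (hg : Function.Injective g) :
    L μ (fun ω => g (Z ω)) = L μ Z := by
  classical
  unfold L
  rw [← Finset.sum_subset (Finset.subset_univ (Finset.univ.image g))]
  · rw [Finset.sum_image (fun a _ b _ h => hg h)]
    refine Finset.sum_congr rfl fun v _ => ?_
    rw [pr_comp_inj μ hg]
  · intro c _ hc
    have : pr μ (fun ω => g (Z ω)) c = 0 := by
      apply pr_comp_not_range
      intro v hv
      exact hc (Finset.mem_image.2 ⟨v, Finset.mem_univ v, hv⟩)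
    rw [this]
    simp

lemma pr_marg_fst {κ₁ κ₂ : Type*} [Fintype κ₁] {A : Ω → κ₁} {B : Ω → κ₂}
    (hAB : ∀ v : κ₁ × κ₂, MeasurableSet {ω | (A ω, B ω) = v}) (b : κ₂) :
    ∑ a, pr μ (fun ω => (A ω, B ω)) (a, b) = pr μ B b := by
  classical
  have hset : {ω | B ω = b} = ⋃ a ∈ Finset.univ, {ω | (A ω, B ω) = (a, b)} := by
    ext ω
    simp only [Set.mem_setOf_eq, Set.mem_iUnion, Finset.mem_univ, exists_true_left,
      Prod.mk.injEq, exists_prop, true_and]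
    exact ⟨fun h => ⟨A ω, rfl, h⟩, fun ⟨a, _, h⟩ => h⟩
  have hdisj : Set.PairwiseDisjoint (↑(Finset.univ : Finset κ₁))
      (fun a => {ω | (A ω, B ω) = (a, b)}) := by
    intro x _ y _ hxy
    refine Set.disjoint_left.2 fun ω hx hy => hxy ?_
    rw [Set.mem_setOf_eq] at hx hy
    have h1 := (Prod.ext_iff.1 hx).1
    have h2 := (Prod.ext_iff.1 hy).1
    simp only at h1 h2
    rw [← h1, ← h2]
  rw [pr, hset, measure_biUnion_finset hdisj (fun a _ => hAB (a, b)),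
    ENNReal.toReal_sum (fun a _ => measure_ne_top μ _)]
  rfl

end Aux2

section Aux3
variable (μ : Measure Ω) [IsProbabilityMeasure μ]

lemma measFib_pair {κ₁ κ₂ : Type*} {A : Ω → κ₁} {B : Ω → κ₂}
    (hA : ∀ a, MeasurableSet {ω | A ω = a}) (hB : ∀ b, MeasurableSet {ω | B ω = b}) :
    ∀ v : κ₁ × κ₂, MeasurableSet {ω | (A ω, B ω) = v} := by
  intro v
  have : {ω | (A ω, B ω) = v} = {ω | A ω = v.1} ∩ {ω | B ω = v.2} := by
    ext ω; simp [Prod.ext_iff]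
  rw [this]
  exact (hA _).inter (hB _)

lemma L_pair_ge {κ₁ κ₂ : Type*} [Fintype κ₁] [Fintype κ₂] {A : Ω → κ₁} {B : Ω → κ₂}
    (hA : ∀ a, MeasurableSet {ω | A ω = a}) (hB : ∀ b, MeasurableSet {ω | B ω = b}) :
    L μ A + L μ B ≤ L μ (fun ω => (A ω, B ω)) := by
  classical
  have hP := measFib_pair hA hB
  set a : κ₁ × κ₂ → ℝ := fun v => pr μ (fun ω => (A ω, B ω)) v with ha_def
  set b : κ₁ × κ₂ → ℝ := fun v => pr μ A v.1 * pr μ B v.2 with hb_def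
  have hmono1 : ∀ v : κ₁ × κ₂, a v ≤ pr μ A v.1 := fun v =>
    pr_mono μ (fun ω h => (Prod.ext_iff.1 h).1)
  have hmono2 : ∀ v : κ₁ × κ₂, a v ≤ pr μ B v.2 := fun v =>
    pr_mono μ (fun ω h => (Prod.ext_iff.1 h).2)
  have h0 : ∀ v, b v = 0 → a v = 0 := by
    intro v hv
    rcases mul_eq_zero.1 hv with h | h
    · exact le_antisymm (h ▸ hmono1 v) (pr_nonneg μ _ _)
    · exact le_antisymm (h ▸ hmono2 v) (pr_nonneg μ _ _)
  have hsum : ∑ v, b v = ∑ v, a v := by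
    rw [sum_pr μ hP]
    rw [show ∑ v : κ₁ × κ₂, b v = (∑ x, pr μ A x) * (∑ y, pr μ B y) by
      rw [Finset.sum_mul_sum, Fintype.sum_prod_type]]
    rw [sum_pr μ hA, sum_pr μ hB, one_mul]
  have hg := gibbs a b (fun v => pr_nonneg μ _ _)
    (fun v => mul_nonneg (pr_nonneg μ _ _) (pr_nonneg μ _ _)) h0 (le_of_eq hsum)
  have hlhs : ∑ v, a v * Real.log (b v)
      = ∑ v, a v * Real.log (pr μ A v.1) + ∑ v, a v * Real.log (pr μ B v.2) := by
    rw [← Finset.sum_add_distrib]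
    refine Finset.sum_congr rfl fun v _ => ?_
    rcases eq_or_ne (a v) 0 with h | h
    · rw [h]; ring
    · have hav : 0 < a v := lt_of_le_of_ne (pr_nonneg μ _ _) (Ne.symm h)
      have h1 : pr μ A v.1 ≠ 0 := fun hh => h (le_antisymm (hh ▸ hmono1 v) (pr_nonneg μ _ _))
      have h2 : pr μ B v.2 ≠ 0 := fun hh => h (le_antisymm (hh ▸ hmono2 v) (pr_nonneg μ _ _))
      rw [hb_def]
      simp only []
      rw [Real.log_mul h1 h2]
      ring
  have e1 : ∑ v : κ₁ × κ₂, a v * Real.log (pr μ A v.1) = L μ A := by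
    have := sum_pr_mul μ hP (fun v => v.1) (fun c => Real.log (pr μ A c))
    exact this.trans rfl
  have e2 : ∑ v : κ₁ × κ₂, a v * Real.log (pr μ B v.2) = L μ B := by
    have := sum_pr_mul μ hP (fun v => v.2) (fun c => Real.log (pr μ B c))
    exact this.trans rfl
  rw [hlhs, e1, e2] at hg
  exact hg

end Aux3

section Aux4
variable (μ : Measure Ω) [IsProbabilityMeasure μ]
variable {α β γ : Type*} [Fintype α] [Fintype β] [Fintype γ]
variable {X : Ω → α} {Y : Ω → β} {Z : Ω → γ}

lemma L_markov (hX : ∀ a, MeasurableSet {ω | X ω = a}) (hY : ∀ b, MeasurableSet {ω | Y ω = b})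
    (hZ : ∀ c, MeasurableSet {ω | Z ω = c}) (h : CondIndepGiven μ Y Z X) :
    L μ (fun ω => (X ω, Y ω, Z ω)) + L μ X
      = L μ (fun ω => (X ω, Y ω)) + L μ (fun ω => (X ω, Z ω)) := by
  classical
  have hT : ∀ v : α × β × γ, MeasurableSet {ω | (X ω, Y ω, Z ω) = v} :=
    measFib_pair hX (measFib_pair hY hZ)
  set t : α × β × γ → ℝ := fun v => pr μ (fun ω => (X ω, Y ω, Z ω)) v with ht_def
  have hreal : ∀ v : α × β × γ,
      t v * pr μ X v.1 = pr μ (fun ω => (X ω, Y ω)) (v.1, v.2.1)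
        * pr μ (fun ω => (X ω, Z ω)) (v.1, v.2.2) := by
    rintro ⟨x, y, z⟩
    have h1 : {ω | (X ω, Y ω, Z ω) = (x, y, z)} = {ω | X ω = x ∧ Y ω = y ∧ Z ω = z} := by
      ext ω; simp [Prod.ext_iff]
    have h2 : {ω | (X ω, Y ω) = (x, y)} = {ω | X ω = x ∧ Y ω = y} := by
      ext ω; simp [Prod.ext_iff]
    have h3 : {ω | (X ω, Z ω) = (x, z)} = {ω | X ω = x ∧ Z ω = z} := by
      ext ω; simp [Prod.ext_iff]
    have := h x y z
    simp only [ht_def, pr, h1, h2, h3]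
    rw [← ENNReal.toReal_mul, ← ENNReal.toReal_mul, this]
  have hm1 : ∀ v : α × β × γ, t v ≤ pr μ X v.1 := fun v =>
    pr_mono μ (fun ω hω => (Prod.ext_iff.1 hω).1)
  have hm2 : ∀ v : α × β × γ, t v ≤ pr μ (fun ω => (X ω, Y ω)) (v.1, v.2.1) := fun v =>
    pr_mono μ (fun ω hω => by
      have h1 := (Prod.ext_iff.1 hω).1
      have h2 := (Prod.ext_iff.1 (Prod.ext_iff.1 hω).2).1
      simp only at h1 h2
      simp [h1, h2])
  have hm3 : ∀ v : α × β × γ, t v ≤ pr μ (fun ω => (X ω, Z ω)) (v.1, v.2.2) := fun v =>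
    pr_mono μ (fun ω hω => by
      have h1 := (Prod.ext_iff.1 hω).1
      have h2 := (Prod.ext_iff.1 (Prod.ext_iff.1 hω).2).2
      simp only at h1 h2
      simp [h1, h2])
  have key : ∀ v : α × β × γ, t v * Real.log (t v)
      = t v * Real.log (pr μ (fun ω => (X ω, Y ω)) (v.1, v.2.1))
        + t v * Real.log (pr μ (fun ω => (X ω, Z ω)) (v.1, v.2.2))
        - t v * Real.log (pr μ X v.1) := by
    intro v
    rcases eq_or_ne (t v) 0 with h0 | h0
    · rw [h0]; ring
    · have htv : 0 < t v := lt_of_le_of_ne (pr_nonneg μ _ _) (Ne.symm h0)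
      have hx : pr μ X v.1 ≠ 0 := fun hh => h0 (le_antisymm (hh ▸ hm1 v) (pr_nonneg μ _ _))
      have hxy : pr μ (fun ω => (X ω, Y ω)) (v.1, v.2.1) ≠ 0 :=
        fun hh => h0 (le_antisymm (hh ▸ hm2 v) (pr_nonneg μ _ _))
      have hxz : pr μ (fun ω => (X ω, Z ω)) (v.1, v.2.2) ≠ 0 :=
        fun hh => h0 (le_antisymm (hh ▸ hm3 v) (pr_nonneg μ _ _))
      have hlog := congrArg Real.log (hreal v)
      rw [Real.log_mul h0 hx, Real.log_mul hxy hxz] at hlog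
      have : Real.log (t v) = Real.log (pr μ (fun ω => (X ω, Y ω)) (v.1, v.2.1))
          + Real.log (pr μ (fun ω => (X ω, Z ω)) (v.1, v.2.2)) - Real.log (pr μ X v.1) := by
        linarith
      rw [this]; ring
  have hsplit : L μ (fun ω => (X ω, Y ω, Z ω))
      = ∑ v : α × β × γ, t v * Real.log (pr μ (fun ω => (X ω, Y ω)) (v.1, v.2.1))
        + ∑ v : α × β × γ, t v * Real.log (pr μ (fun ω => (X ω, Z ω)) (v.1, v.2.2))
        - ∑ v : α × β × γ, t v * Real.log (pr μ X v.1) := by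
    rw [← Finset.sum_add_distrib, ← Finset.sum_sub_distrib]
    exact Finset.sum_congr rfl fun v _ => key v
  have e1 : ∑ v : α × β × γ, t v * Real.log (pr μ (fun ω => (X ω, Y ω)) (v.1, v.2.1))
      = L μ (fun ω => (X ω, Y ω)) :=
    (sum_pr_mul μ hT (fun v => (v.1, v.2.1))
      (fun c => Real.log (pr μ (fun ω => (X ω, Y ω)) c))).trans rfl
  have e2 : ∑ v : α × β × γ, t v * Real.log (pr μ (fun ω => (X ω, Z ω)) (v.1, v.2.2))
      = L μ (fun ω => (X ω, Z ω)) :=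
    (sum_pr_mul μ hT (fun v => (v.1, v.2.2))
      (fun c => Real.log (pr μ (fun ω => (X ω, Z ω)) c))).trans rfl
  have e3 : ∑ v : α × β × γ, t v * Real.log (pr μ X v.1) = L μ X :=
    (sum_pr_mul μ hT (fun v => v.1) (fun c => Real.log (pr μ X c))).trans rfl
  rw [hsplit, e1, e2, e3]
  ring

end Aux4


section Aux5
variable (μ : Measure Ω) [IsProbabilityMeasure μ]
variable {α β γ : Type*} [Fintype α] [Fintype β] [Fintype γ]
variable {X : Ω → α} {Y : Ω → β} {Z : Ω → γ}

lemma L_submod (hX : ∀ a, MeasurableSet {ω | X ω = a}) (hY : ∀ b, MeasurableSet {ω | Y ω = b})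
    (hZ : ∀ c, MeasurableSet {ω | Z ω = c}) :
    L μ (fun ω => (X ω, Z ω)) + L μ (fun ω => (Y ω, Z ω))
      ≤ L μ (fun ω => (X ω, Y ω, Z ω)) + L μ Z := by
  classical
  have hT : ∀ v : α × β × γ, MeasurableSet {ω | (X ω, Y ω, Z ω) = v} :=
    measFib_pair hX (measFib_pair hY hZ)
  have hXZ := measFib_pair hX hZ
  have hYZ := measFib_pair hY hZ
  set t : α × β × γ → ℝ := fun v => pr μ (fun ω => (X ω, Y ω, Z ω)) v with ht_def
  set b : α × β × γ → ℝ := fun v =>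
    if pr μ Z v.2.2 = 0 then 0
    else pr μ (fun ω => (X ω, Z ω)) (v.1, v.2.2) * pr μ (fun ω => (Y ω, Z ω)) (v.2.1, v.2.2)
      / pr μ Z v.2.2 with hb_def
  have hm1 : ∀ v : α × β × γ, t v ≤ pr μ Z v.2.2 := fun v =>
    pr_mono μ (fun ω hω => by
      have h2 := (Prod.ext_iff.1 (Prod.ext_iff.1 hω).2).2
      simpa using h2)
  have hm2 : ∀ v : α × β × γ, t v ≤ pr μ (fun ω => (X ω, Z ω)) (v.1, v.2.2) := fun v =>
    pr_mono μ (fun ω hω => by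
      have h1 := (Prod.ext_iff.1 hω).1
      have h2 := (Prod.ext_iff.1 (Prod.ext_iff.1 hω).2).2
      simp only at h1 h2
      simp [h1, h2])
  have hm3 : ∀ v : α × β × γ, t v ≤ pr μ (fun ω => (Y ω, Z ω)) (v.2.1, v.2.2) := fun v =>
    pr_mono μ (fun ω hω => by
      have h1 := (Prod.ext_iff.1 (Prod.ext_iff.1 hω).2).1
      have h2 := (Prod.ext_iff.1 (Prod.ext_iff.1 hω).2).2
      simp only at h1 h2
      simp [h1, h2])
  have hbnn : ∀ v, 0 ≤ b v := by
    intro v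
    rw [hb_def]
    simp only []
    split
    · exact le_refl 0
    · exact div_nonneg (mul_nonneg (pr_nonneg μ _ _) (pr_nonneg μ _ _)) (pr_nonneg μ _ _)
  have h0 : ∀ v, b v = 0 → t v = 0 := by
    intro v hv
    rw [hb_def] at hv
    simp only [] at hv
    split at hv
    · next hz => exact le_antisymm (hz ▸ hm1 v) (pr_nonneg μ _ _)
    · next hz =>
      rcases div_eq_zero_iff.1 hv with h | h
      · rcases mul_eq_zero.1 h with h' | h'
        · exact le_antisymm (h' ▸ hm2 v) (pr_nonneg μ _ _)
        · exact le_antisymm (h' ▸ hm3 v) (pr_nonneg μ _ _)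
      · exact absurd h hz
  have hsumb : ∑ v, b v ≤ ∑ v, t v := by
    rw [sum_pr μ hT]
    have hb2 : ∑ v : α × β × γ, b v = ∑ z, if pr μ Z z = 0 then 0 else pr μ Z z := by
      rw [Fintype.sum_prod_type]
      have : ∀ x : α, ∑ w : β × γ, b (x, w) = ∑ y, ∑ z, b (x, y, z) := fun x =>
        Fintype.sum_prod_type _
      rw [Finset.sum_congr rfl fun x _ => this x]
      rw [Finset.sum_comm]
      have e1 : ∀ y : β, ∑ x : α, ∑ z : γ, b (x, y, z) = ∑ z : γ, ∑ x : α, b (x, y, z) :=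
        fun y => Finset.sum_comm
      rw [Finset.sum_congr rfl fun y _ => e1 y, Finset.sum_comm]
      refine Finset.sum_congr rfl fun z _ => ?_
      by_cases hz : pr μ Z z = 0
      · simp only [hb_def, hz, if_pos, if_true]
        simp
      · simp only [hb_def, if_neg hz]
        simp only [← Finset.sum_div, ← Finset.mul_sum, ← Finset.sum_mul]
        rw [pr_marg_fst μ hXZ z, pr_marg_fst μ hYZ z, mul_div_assoc, div_self hz, mul_one]
    rw [hb2, ← sum_pr μ hZ]
    refine Finset.sum_le_sum fun z _ => ?_
    by_cases hz : pr μ Z z = 0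
    · rw [if_pos hz]; exact pr_nonneg μ _ _
    · rw [if_neg hz]
  have hg := gibbs t b (fun v => pr_nonneg μ _ _) hbnn h0 hsumb
  have hlhs : ∑ v, t v * Real.log (b v)
      = ∑ v : α × β × γ, t v * Real.log (pr μ (fun ω => (X ω, Z ω)) (v.1, v.2.2))
        + ∑ v : α × β × γ, t v * Real.log (pr μ (fun ω => (Y ω, Z ω)) (v.2.1, v.2.2))
        - ∑ v : α × β × γ, t v * Real.log (pr μ Z v.2.2) := by
    rw [← Finset.sum_add_distrib, ← Finset.sum_sub_distrib]
    refine Finset.sum_congr rfl fun v _ => ?_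
    rcases eq_or_ne (t v) 0 with h | h
    · rw [h]; ring
    · have hz : pr μ Z v.2.2 ≠ 0 := fun hh => h (le_antisymm (hh ▸ hm1 v) (pr_nonneg μ _ _))
      have hxz : pr μ (fun ω => (X ω, Z ω)) (v.1, v.2.2) ≠ 0 :=
        fun hh => h (le_antisymm (hh ▸ hm2 v) (pr_nonneg μ _ _))
      have hyz : pr μ (fun ω => (Y ω, Z ω)) (v.2.1, v.2.2) ≠ 0 :=
        fun hh => h (le_antisymm (hh ▸ hm3 v) (pr_nonneg μ _ _))
      have hbv : b v = pr μ (fun ω => (X ω, Z ω)) (v.1, v.2.2)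
          * pr μ (fun ω => (Y ω, Z ω)) (v.2.1, v.2.2) / pr μ Z v.2.2 := by
        rw [hb_def]; simp only [if_neg hz]
      rw [hbv, Real.log_div (mul_ne_zero hxz hyz) hz, Real.log_mul hxz hyz]
      ring
  have e1 : ∑ v : α × β × γ, t v * Real.log (pr μ (fun ω => (X ω, Z ω)) (v.1, v.2.2))
      = L μ (fun ω => (X ω, Z ω)) :=
    (sum_pr_mul μ hT (fun v => (v.1, v.2.2))
      (fun c => Real.log (pr μ (fun ω => (X ω, Z ω)) c))).trans rfl
  have e2 : ∑ v : α × β × γ, t v * Real.log (pr μ (fun ω => (Y ω, Z ω)) (v.2.1, v.2.2))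
      = L μ (fun ω => (Y ω, Z ω)) :=
    (sum_pr_mul μ hT (fun v => (v.2.1, v.2.2))
      (fun c => Real.log (pr μ (fun ω => (Y ω, Z ω)) c))).trans rfl
  have e3 : ∑ v : α × β × γ, t v * Real.log (pr μ Z v.2.2) = L μ Z :=
    (sum_pr_mul μ hT (fun v => v.2.2) (fun c => Real.log (pr μ Z c))).trans rfl
  rw [hlhs, e1, e2, e3] at hg
  have : L μ (fun ω => (X ω, Y ω, Z ω)) = ∑ v, t v * Real.log (t v) := rfl
  linarith [hg]

end Aux5

section Aux6
variable (μ : Measure Ω) [IsProbabilityMeasure μ]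
variable {α β γ : Type*} [Fintype α] [Fintype β] [Fintype γ]

lemma ent_eq_negL (A : Ω → α) : ent μ A = -L μ A := by
  unfold ent L
  rw [← Finset.sum_neg_distrib]
  exact Finset.sum_congr rfl fun v _ => by rw [Real.negMulLog]; ring

lemma mutInfo_eq_L (A : Ω → α) (B : Ω → β) :
    mutInfo μ A B = L μ (fun ω => (A ω, B ω)) - L μ A - L μ B := by
  unfold mutInfo condEnt
  rw [ent_eq_negL, ent_eq_negL, ent_eq_negL]
  ring

lemma mutInfo_dpi {X : Ω → α} {Y : Ω → β} {Z : Ω → γ}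
    (hX : ∀ a, MeasurableSet {ω | X ω = a}) (hY : ∀ b, MeasurableSet {ω | Y ω = b})
    (hZ : ∀ c, MeasurableSet {ω | Z ω = c}) (h : CondIndepGiven μ Y Z X) :
    mutInfo μ Z Y ≤ mutInfo μ X Y := by
  have hmk := L_markov μ hX hY hZ h
  have hsm := L_submod μ hX hY hZ
  have hswap : L μ (fun ω => (Z ω, Y ω)) = L μ (fun ω => (Y ω, Z ω)) :=
    L_comp_inj μ (Z := fun ω => (Y ω, Z ω)) (g := Prod.swap) Prod.swap_injective
  rw [mutInfo_eq_L, mutInfo_eq_L]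
  rw [hswap]
  linarith

lemma condMutInfo_le_mutInfo {X : Ω → α} {Y : Ω → β} {Z : Ω → γ}
    (hY : ∀ b, MeasurableSet {ω | Y ω = b}) (hZ : ∀ c, MeasurableSet {ω | Z ω = c}) :
    condMutInfo μ X Y Z ≤ mutInfo μ (fun ω => (Z ω, X ω)) Y := by
  have hpair := L_pair_ge μ hY hZ
  have r1 : L μ (fun ω => (Z ω, X ω)) = L μ (fun ω => (X ω, Z ω)) :=
    L_comp_inj μ (Z := fun ω => (X ω, Z ω)) (g := Prod.swap) Prod.swap_injective
  have r2 : L μ (fun ω => ((Z ω, X ω), Y ω)) = L μ (fun ω => (X ω, Y ω, Z ω)) := by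
    have hg : Function.Injective
        (fun p : α × β × γ => ((p.2.2, p.1), p.2.1)) :=
      Function.LeftInverse.injective
        (g := fun r : (γ × α) × β => (r.1.2, r.2, r.1.1)) (fun p => rfl)
    exact L_comp_inj μ (Z := fun ω => (X ω, Y ω, Z ω))
      (g := fun p => ((p.2.2, p.1), p.2.1)) hg
  unfold condMutInfo condEnt
  rw [mutInfo_eq_L, ent_eq_negL, ent_eq_negL, ent_eq_negL, ent_eq_negL, r1, r2]
  have : L μ (fun ω => (X ω, Y ω, Z ω)) = L μ (fun ω => (X ω, (Y ω, Z ω))) := rfl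
  linarith

end Aux6

section Aux7
variable (μ : Measure Ω) [IsProbabilityMeasure μ]
variable {n : ℕ} {α β : Fin n → Type*} [∀ i, Fintype (α i)] [∀ i, Fintype (β i)]

lemma measFib_pi {Y : Ω → ∀ i, β i} (hY : ∀ i b, MeasurableSet {ω | Y ω i = b}) :
    ∀ y, MeasurableSet {ω | Y ω = y} := by
  intro y
  have : {ω | Y ω = y} = ⋂ i, {ω | Y ω i = y i} := by
    ext ω; simp [funext_iff]
  rw [this]
  exact MeasurableSet.iInter fun i => hY i (y i)

lemma L_pi_ge {Y : Ω → ∀ i, β i} (hY : ∀ i b, MeasurableSet {ω | Y ω i = b}) :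
    ∑ i, L μ (fun ω => Y ω i) ≤ L μ Y := by
  classical
  have hYf := measFib_pi hY
  set a : (∀ i, β i) → ℝ := fun y => pr μ Y y with ha_def
  set b : (∀ i, β i) → ℝ := fun y => ∏ i, pr μ (fun ω => Y ω i) (y i) with hb_def
  have hmono : ∀ (y : ∀ i, β i) (i : Fin n), a y ≤ pr μ (fun ω => Y ω i) (y i) := fun y i =>
    pr_mono μ (fun ω hω => congrFun hω i)
  have h0 : ∀ y, b y = 0 → a y = 0 := by
    intro y hy
    obtain ⟨i, _, hi⟩ := Finset.prod_eq_zero_iff.1 hy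
    exact le_antisymm (hi ▸ hmono y i) (pr_nonneg μ _ _)
  have hsum : ∑ y, b y = ∑ y, a y := by
    rw [sum_pr μ hYf, hb_def]
    have := Finset.prod_univ_sum (fun i : Fin n => (Finset.univ : Finset (β i)))
      (fun i c => pr μ (fun ω => Y ω i) c)
    rw [Fintype.piFinset_univ] at this
    rw [← this]
    rw [Finset.prod_congr rfl fun i _ => sum_pr μ (fun c => hY i c), Finset.prod_const_one]
  have hg := gibbs a b (fun y => pr_nonneg μ _ _)
    (fun y => Finset.prod_nonneg fun i _ => pr_nonneg μ _ _) h0 (le_of_eq hsum)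
  have hlhs : ∑ y, a y * Real.log (b y)
      = ∑ i, ∑ y : ∀ j, β j, a y * Real.log (pr μ (fun ω => Y ω i) (y i)) := by
    rw [Finset.sum_comm]
    refine Finset.sum_congr rfl fun y _ => ?_
    rw [← Finset.mul_sum]
    rcases eq_or_ne (a y) 0 with h | h
    · rw [h]; ring
    · congr 1
      rw [hb_def]
      exact Real.log_prod fun i _ =>
        fun hh => h (le_antisymm (hh ▸ hmono y i) (pr_nonneg μ _ _))
  have e : ∀ i : Fin n, ∑ y : ∀ j, β j, a y * Real.log (pr μ (fun ω => Y ω i) (y i))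
      = L μ (fun ω => Y ω i) := fun i =>
    (sum_pr_mul μ hYf (fun y => y i) (fun c => Real.log (pr μ (fun ω => Y ω i) c))).trans rfl
  rw [hlhs, Finset.sum_congr rfl fun i _ => e i] at hg
  exact hg

lemma L_single_letter {X : Ω → ∀ i, α i} {Y : Ω → ∀ i, β i}
    (hX : ∀ i a, MeasurableSet {ω | X ω i = a}) (hY : ∀ i b, MeasurableSet {ω | Y ω i = b})
    (hfact : ∀ (x : ∀ i, α i) (y : ∀ i, β i),
      pr μ (fun ω => (X ω, Y ω)) (x, y) * ∏ i, pr μ (fun ω => X ω i) (x i)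
        = pr μ X x * ∏ i, pr μ (fun ω => (X ω i, Y ω i)) (x i, y i)) :
    L μ (fun ω => (X ω, Y ω)) - L μ X
      = ∑ i, (L μ (fun ω => (X ω i, Y ω i)) - L μ (fun ω => X ω i)) := by
  classical
  have hXf := measFib_pi hX
  have hYf := measFib_pi hY
  have hP : ∀ v : (∀ i, α i) × (∀ i, β i), MeasurableSet {ω | (X ω, Y ω) = v} :=
    measFib_pair hXf hYf
  set t : (∀ i, α i) × (∀ i, β i) → ℝ := fun v => pr μ (fun ω => (X ω, Y ω)) v with ht_def
  have hmX : ∀ v : (∀ i, α i) × (∀ i, β i), t v ≤ pr μ X v.1 := fun v =>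
    pr_mono μ (fun ω hω => (Prod.ext_iff.1 hω).1)
  have hmXi : ∀ (v : (∀ i, α i) × (∀ i, β i)) (i : Fin n),
      t v ≤ pr μ (fun ω => X ω i) (v.1 i) := fun v i =>
    pr_mono μ (fun ω hω => congrFun (Prod.ext_iff.1 hω).1 i)
  have hmXYi : ∀ (v : (∀ i, α i) × (∀ i, β i)) (i : Fin n),
      t v ≤ pr μ (fun ω => (X ω i, Y ω i)) (v.1 i, v.2 i) := fun v i =>
    pr_mono μ (fun ω hω => by
      have h1 := congrFun (Prod.ext_iff.1 hω).1 i
      have h2 := congrFun (Prod.ext_iff.1 hω).2 i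
      simp only at h1 h2
      simp [h1, h2])
  have key : ∀ v : (∀ i, α i) × (∀ i, β i),
      t v * Real.log (t v) - t v * Real.log (pr μ X v.1)
        = ∑ i, (t v * Real.log (pr μ (fun ω => (X ω i, Y ω i)) (v.1 i, v.2 i))
            - t v * Real.log (pr μ (fun ω => X ω i) (v.1 i))) := by
    intro v
    rcases eq_or_ne (t v) 0 with h | h
    · rw [h]; simp
    · have hxi : ∀ i, pr μ (fun ω => X ω i) (v.1 i) ≠ 0 := fun i hh =>
        h (le_antisymm (hh ▸ hmXi v i) (pr_nonneg μ _ _))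
      have hxyi : ∀ i, pr μ (fun ω => (X ω i, Y ω i)) (v.1 i, v.2 i) ≠ 0 := fun i hh =>
        h (le_antisymm (hh ▸ hmXYi v i) (pr_nonneg μ _ _))
      have hx : pr μ X v.1 ≠ 0 := fun hh =>
        h (le_antisymm (hh ▸ hmX v) (pr_nonneg μ _ _))
      have hfv := hfact v.1 v.2
      rw [show (v.1, v.2) = v from rfl] at hfv
      have hlog := congrArg Real.log hfv
      rw [Real.log_mul h (Finset.prod_ne_zero_iff.2 fun i _ => hxi i),
        Real.log_mul hx (Finset.prod_ne_zero_iff.2 fun i _ => hxyi i),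
        Real.log_prod (fun i _ => hxi i), Real.log_prod (fun i _ => hxyi i)] at hlog
    -- hlog : log t + ∑ log pXi = log pX + ∑ log pXYi
      rw [Finset.sum_sub_distrib, ← Finset.mul_sum, ← Finset.mul_sum, ← mul_sub, ← mul_sub]
      congr 1
      linarith
  have hsplit : L μ (fun ω => (X ω, Y ω)) - L μ X
      = ∑ v : (∀ i, α i) × (∀ i, β i), (t v * Real.log (t v) - t v * Real.log (pr μ X v.1)) := by
    rw [Finset.sum_sub_distrib]
    congr 1
    exact ((sum_pr_mul μ hP (fun v => v.1) (fun c => Real.log (pr μ X c))).trans rfl).symm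
  rw [hsplit, Finset.sum_congr rfl fun v _ => key v, Finset.sum_comm]
  refine Finset.sum_congr rfl fun i _ => ?_
  rw [Finset.sum_sub_distrib]
  congr 1
  · exact (sum_pr_mul μ hP (fun v => (v.1 i, v.2 i))
      (fun c => Real.log (pr μ (fun ω => (X ω i, Y ω i)) c))).trans rfl
  · exact (sum_pr_mul μ hP (fun v => v.1 i)
      (fun c => Real.log (pr μ (fun ω => X ω i) c))).trans rfl

lemma mutInfo_single_letter {X : Ω → ∀ i, α i} {Y : Ω → ∀ i, β i}
    (hX : ∀ i a, MeasurableSet {ω | X ω i = a}) (hY : ∀ i b, MeasurableSet {ω | Y ω i = b})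
    (hfact : ∀ (x : ∀ i, α i) (y : ∀ i, β i),
      pr μ (fun ω => (X ω, Y ω)) (x, y) * ∏ i, pr μ (fun ω => X ω i) (x i)
        = pr μ X x * ∏ i, pr μ (fun ω => (X ω i, Y ω i)) (x i, y i)) :
    mutInfo μ X Y ≤ ∑ i, mutInfo μ (fun ω => X ω i) (fun ω => Y ω i) := by
  have h1 := L_single_letter μ hX hY hfact
  have h2 := L_pi_ge μ hY
  rw [mutInfo_eq_L]
  rw [Finset.sum_congr rfl fun i (_ : i ∈ Finset.univ) =>
    mutInfo_eq_L μ (fun ω => X ω i) (fun ω => Y ω i)]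
  rw [Finset.sum_sub_distrib, Finset.sum_sub_distrib]
  rw [Finset.sum_sub_distrib] at h1
  linarith

end Aux7

section Aux8
variable (μ : Measure Ω) [IsProbabilityMeasure μ]

lemma telescope_fact {n : ℕ} {α β : Fin n → Type*}
    {XSD : Ω → ∀ i, α i} {Y₁ : Ω → ∀ i, β i}
    (hmem : ∀ i : Fin n,
      CondIndepGiven μ (fun ω => Y₁ ω i)
        (fun ω => ((fun j : {j : Fin n // j ≠ i} => XSD ω j.1),
                   (fun j : {j : Fin n // j.1 < i} => Y₁ ω j.1)))
        (fun ω => XSD ω i))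
    (x : ∀ i, α i) (y : ∀ i, β i) :
    μ {ω | XSD ω = x ∧ Y₁ ω = y} * ∏ i, μ {ω | XSD ω i = x i}
      = μ {ω | XSD ω = x} * ∏ i, μ {ω | XSD ω i = x i ∧ Y₁ ω i = y i} := by
  classical
  set S : ℕ → Set Ω := fun k => {ω | XSD ω = x ∧ ∀ j : Fin n, (j : ℕ) < k → Y₁ ω j = y j}
    with hS_def
  have main : ∀ k, k ≤ n →
      μ (S k) * ∏ j ∈ Finset.univ.filter (fun j : Fin n => (j : ℕ) < k), μ {ω | XSD ω j = x j}
        = μ (S 0) * ∏ j ∈ Finset.univ.filter (fun j : Fin n => (j : ℕ) < k),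
            μ {ω | XSD ω j = x j ∧ Y₁ ω j = y j} := by
    intro k
    induction k with
    | zero =>
      intro _
      have : Finset.univ.filter (fun j : Fin n => (j : ℕ) < 0) = ∅ := by
        ext j; simp
      rw [this]
      simp
    | succ k ih =>
      intro hk1
      have hk : k < n := lt_of_lt_of_le (Nat.lt_succ_self k) hk1
      set i : Fin n := ⟨k, hk⟩ with hi_def
      have hstep := hmem i (x i) (y i)
        ((fun j : {j : Fin n // j ≠ i} => x j.1), (fun j : {j : Fin n // (j : ℕ) < (i : ℕ)} => y j.1))
      have hA : {ω | XSD ω i = x i ∧ Y₁ ω i = y i ∧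
          ((fun j : {j : Fin n // j ≠ i} => XSD ω j.1),
           (fun j : {j : Fin n // (j : ℕ) < (i : ℕ)} => Y₁ ω j.1))
            = ((fun j : {j : Fin n // j ≠ i} => x j.1),
               (fun j : {j : Fin n // (j : ℕ) < (i : ℕ)} => y j.1))} = S (k + 1) := by
        ext ω
        simp only [hS_def, Set.mem_setOf_eq, Prod.ext_iff, funext_iff, funext_iff, Subtype.forall]
        constructor
        · rintro ⟨h1, h2, h3, h4⟩
          constructor
          · intro j
            by_cases hj : j = i
            · rw [hj]; exact h1
            · exact h3 j hj
          · intro j hj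
            rcases Nat.lt_succ_iff_lt_or_eq.1 hj with hj' | hj'
            · exact h4 j hj'
            · have : j = i := Fin.ext hj'
              rw [this]; exact h2
        · rintro ⟨h1, h2⟩
          exact ⟨h1 i, h2 i (Nat.lt_succ_self k), fun j _ => h1 j,
            fun j hj => h2 j (lt_trans hj (Nat.lt_succ_self k))⟩
      have hD : {ω | XSD ω i = x i ∧
          ((fun j : {j : Fin n // j ≠ i} => XSD ω j.1),
           (fun j : {j : Fin n // (j : ℕ) < (i : ℕ)} => Y₁ ω j.1))
            = ((fun j : {j : Fin n // j ≠ i} => x j.1),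
               (fun j : {j : Fin n // (j : ℕ) < (i : ℕ)} => y j.1))} = S k := by
        ext ω
        simp only [hS_def, Set.mem_setOf_eq, Prod.ext_iff, funext_iff, Subtype.forall]
        constructor
        · rintro ⟨h1, h3, h4⟩
          refine ⟨fun j => ?_, fun j hj => h4 j hj⟩
          by_cases hj : j = i
          · rw [hj]; exact h1
          · exact h3 j hj
        · rintro ⟨h1, h2⟩
          exact ⟨h1 i, fun j _ => h1 j, fun j hj => h2 j hj⟩
      rw [hA, hD] at hstep
      have hfilter : Finset.univ.filter (fun j : Fin n => (j : ℕ) < k + 1)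
          = insert i (Finset.univ.filter (fun j : Fin n => (j : ℕ) < k)) := by
        ext j
        simp only [Finset.mem_filter, Finset.mem_univ, true_and, Finset.mem_insert]
        constructor
        · intro hj
          rcases Nat.lt_succ_iff_lt_or_eq.1 hj with hj' | hj'
          · exact Or.inr hj'
          · exact Or.inl (Fin.ext hj')
        · rintro (hj | hj)
          · rw [hj]; exact Nat.lt_succ_self k
          · exact lt_trans hj (Nat.lt_succ_self k)
      have hnotmem : i ∉ Finset.univ.filter (fun j : Fin n => (j : ℕ) < k) := by
        simp [hi_def]
      rw [hfilter, Finset.prod_insert hnotmem, Finset.prod_insert hnotmem]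
      calc μ (S (k + 1)) * (μ {ω | XSD ω i = x i}
            * ∏ j ∈ Finset.univ.filter (fun j : Fin n => (j : ℕ) < k), μ {ω | XSD ω j = x j})
          = (μ (S (k + 1)) * μ {ω | XSD ω i = x i})
            * ∏ j ∈ Finset.univ.filter (fun j : Fin n => (j : ℕ) < k), μ {ω | XSD ω j = x j} := by
            ring
        _ = (μ {ω | XSD ω i = x i ∧ Y₁ ω i = y i} * μ (S k))
            * ∏ j ∈ Finset.univ.filter (fun j : Fin n => (j : ℕ) < k), μ {ω | XSD ω j = x j} := by
            rw [hstep]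
        _ = μ {ω | XSD ω i = x i ∧ Y₁ ω i = y i}
            * (μ (S k)
              * ∏ j ∈ Finset.univ.filter (fun j : Fin n => (j : ℕ) < k), μ {ω | XSD ω j = x j}) := by
            ring
        _ = μ {ω | XSD ω i = x i ∧ Y₁ ω i = y i}
            * (μ (S 0)
              * ∏ j ∈ Finset.univ.filter (fun j : Fin n => (j : ℕ) < k),
                  μ {ω | XSD ω j = x j ∧ Y₁ ω j = y j}) := by
            rw [ih (le_of_lt hk1)]
        _ = μ (S 0) * (μ {ω | XSD ω i = x i ∧ Y₁ ω i = y i}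
              * ∏ j ∈ Finset.univ.filter (fun j : Fin n => (j : ℕ) < k),
                  μ {ω | XSD ω j = x j ∧ Y₁ ω j = y j}) := by
            ring
  have hfin := main n le_rfl
  have hfull : Finset.univ.filter (fun j : Fin n => (j : ℕ) < n) = Finset.univ := by
    ext j; simp [j.isLt]
  have hSn : S n = {ω | XSD ω = x ∧ Y₁ ω = y} := by
    ext ω
    simp only [hS_def, Set.mem_setOf_eq, funext_iff]
    exact ⟨fun ⟨h1, h2⟩ => ⟨h1, fun j => h2 j j.isLt⟩,
      fun ⟨h1, h2⟩ => ⟨h1, fun j _ => h2 j⟩⟩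
  have hS0 : S 0 = {ω | XSD ω = x} := by
    ext ω
    simp [hS_def]
  rw [hfull, hSn, hS0] at hfin
  exact hfin

end Aux8

end InterferenceRelay

open InterferenceRelay in
/-- Converse bound (Appendix A): if `W` is uniform on `𝒲`, Fano's inequality
`H(W | (Y₁, Y₂)) ≤ n ε` holds, the Markov chains `(Y₂, W) − X_SD − Y₁` and `W − X_SR − Y₂`
hold, and the `S–D` channel is memoryless (for every `i`, `Y₁ᵢ` is conditionally independent
of `((X_SD j)_{j ≠ i}, (Y₁ j)_{j < i})` given `X_SD i`), then
`log |𝒲| ≤ ∑ i, I(X_SDᵢ ; Y₁ᵢ) + I(X_SR ; Y₂) + n ε`. -/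
theorem converse_orthogonal_relay
    {Ω 𝒲 : Type*} [MeasurableSpace Ω]
    [MeasurableSpace 𝒲] [MeasurableSingletonClass 𝒲] [Fintype 𝒲] [Nonempty 𝒲]
    {n : ℕ} (hn : 1 ≤ n) {ε : ℝ} (hε : 0 ≤ ε)
    {α β : Fin n → Type*}
    [∀ i, MeasurableSpace (α i)] [∀ i, MeasurableSingletonClass (α i)] [∀ i, Fintype (α i)]
    [∀ i, MeasurableSpace (β i)] [∀ i, MeasurableSingletonClass (β i)] [∀ i, Fintype (β i)]
    {γ δ : Type*}
    [MeasurableSpace γ] [MeasurableSingletonClass γ] [Fintype γ]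
    [MeasurableSpace δ] [MeasurableSingletonClass δ] [Fintype δ]
    (μ : MeasureTheory.Measure Ω) [MeasureTheory.IsProbabilityMeasure μ]
    (W : Ω → 𝒲) (XSD : Ω → ∀ i, α i) (Y₁ : Ω → ∀ i, β i) (XSR : Ω → γ) (Y₂ : Ω → δ)
    (hW : Measurable W)
    (hXSD : ∀ i, Measurable fun ω => XSD ω i) (hY₁ : ∀ i, Measurable fun ω => Y₁ ω i)
    (hXSR : Measurable XSR) (hY₂ : Measurable Y₂)
    (hunif : ∀ w : 𝒲, μ {ω | W ω = w} = (Fintype.card 𝒲 : ENNReal)⁻¹)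
    (hFano : condEnt μ W (fun ω => (Y₁ ω, Y₂ ω)) ≤ n * ε)
    (hmc₁ : CondIndepGiven μ Y₁ (fun ω => (Y₂ ω, W ω)) XSD)
    (hmc₂ : CondIndepGiven μ Y₂ W XSR)
    (hmem : ∀ i : Fin n,
      CondIndepGiven μ (fun ω => Y₁ ω i)
        (fun ω => ((fun j : {j : Fin n // j ≠ i} => XSD ω j.1),
                   (fun j : {j : Fin n // j.1 < i} => Y₁ ω j.1)))
        (fun ω => XSD ω i)) :
    Real.log (Fintype.card 𝒲) ≤
      (∑ i : Fin n, mutInfo μ (fun ω => XSD ω i) (fun ω => Y₁ ω i)) +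
        mutInfo μ XSR Y₂ + n * ε := by
    classical
  have hWf : ∀ w, MeasurableSet {ω | W ω = w} := fun w => hW (measurableSet_singleton w)
  have hXSDi : ∀ i a, MeasurableSet {ω | XSD ω i = a} := fun i a =>
    hXSD i (measurableSet_singleton a)
  have hY₁i : ∀ i b, MeasurableSet {ω | Y₁ ω i = b} := fun i b =>
    hY₁ i (measurableSet_singleton b)
  have hXSRf : ∀ c, MeasurableSet {ω | XSR ω = c} := fun c => hXSR (measurableSet_singleton c)
  have hY₂f : ∀ d, MeasurableSet {ω | Y₂ ω = d} := fun d => hY₂ (measurableSet_singleton d)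
  have hXSDf := measFib_pi hXSDi
  have hY₁f := measFib_pi hY₁i
  have hY₂W := measFib_pair hY₂f hWf
  -- Step 1 : entropy of the uniform message
  have hcard : (0 : ℝ) < (Fintype.card 𝒲 : ℝ) := by
    have := Fintype.card_pos (α := 𝒲)
    exact_mod_cast this
  have hprW : ∀ w, pr μ W w = ((Fintype.card 𝒲 : ℝ))⁻¹ := by
    intro w
    rw [pr, hunif w, ENNReal.toReal_inv]
    simp
  have hentW : ent μ W = Real.log (Fintype.card 𝒲) := by
    unfold ent
    rw [Finset.sum_congr rfl fun w _ => by rw [hprW w]]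
    rw [Finset.sum_const, Finset.card_univ, nsmul_eq_mul]
    rw [Real.negMulLog, Real.log_inv]
    field_simp
  -- Step 2 : Fano
  have hdecomp : ent μ W = mutInfo μ W (fun ω => (Y₁ ω, Y₂ ω))
      + condEnt μ W (fun ω => (Y₁ ω, Y₂ ω)) := by
    unfold mutInfo; ring
  -- Step 3 : chain rule
  have hchain : mutInfo μ W (fun ω => (Y₁ ω, Y₂ ω))
      = mutInfo μ W Y₂ + condMutInfo μ W Y₁ Y₂ := by
    unfold mutInfo condMutInfo condEnt; ring
  -- Step 4 : data processing on the relay link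
  have hstep4 : mutInfo μ W Y₂ ≤ mutInfo μ XSR Y₂ :=
    mutInfo_dpi μ hXSRf hY₂f hWf hmc₂
  -- Step 5 : conditioning bound
  have hstep5 : condMutInfo μ W Y₁ Y₂ ≤ mutInfo μ (fun ω => (Y₂ ω, W ω)) Y₁ :=
    condMutInfo_le_mutInfo μ hY₁f hY₂f
  -- Step 6 : data processing on the direct link
  have hstep6 : mutInfo μ (fun ω => (Y₂ ω, W ω)) Y₁ ≤ mutInfo μ XSD Y₁ :=
    mutInfo_dpi μ hXSDf hY₁f hY₂W hmc₁
  -- Step 7 : single-letterization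
  have hfact : ∀ (x : ∀ i, α i) (y : ∀ i, β i),
      pr μ (fun ω => (XSD ω, Y₁ ω)) (x, y) * ∏ i, pr μ (fun ω => XSD ω i) (x i)
        = pr μ XSD x * ∏ i, pr μ (fun ω => (XSD ω i, Y₁ ω i)) (x i, y i) := by
    intro x y
    have ht := telescope_fact μ hmem x y
    have e1 : {ω | (XSD ω, Y₁ ω) = (x, y)} = {ω | XSD ω = x ∧ Y₁ ω = y} := by
      ext ω; simp [Prod.ext_iff]
    have e2 : ∀ i, {ω | (XSD ω i, Y₁ ω i) = (x i, y i)}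
        = {ω | XSD ω i = x i ∧ Y₁ ω i = y i} := by
      intro i; ext ω; simp [Prod.ext_iff]
    simp only [pr, e1, e2]
    rw [← ENNReal.toReal_prod, ← ENNReal.toReal_mul, ← ENNReal.toReal_prod,
      ← ENNReal.toReal_mul, ht]
  have hstep7 : mutInfo μ XSD Y₁ ≤ ∑ i, mutInfo μ (fun ω => XSD ω i) (fun ω => Y₁ ω i) :=
    mutInfo_single_letter μ hXSDi hY₁i hfact
  -- assemble
  have hFano' : condEnt μ W (fun ω => (Y₁ ω, Y₂ ω)) ≤ n * ε := hFano
  linarith [hdecomp, hchain, hstep4, hstep5, hstep6, hstep7, hFano', hentW.symm]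
end
end

section
/- Let W, X, Y₁, Y₂ be finite-valued random variables on a common probability space such that Y₁ is conditionally independent of (Y₂, W) given X. Then I(W; Y₁ | Y₂) ≤ I(X; Y₁). -/
set_option linter.unusedSectionVars false


open MeasureTheory Real

noncomputable section

namespace IRAux

open InterferenceRelay

/-! ### Pure finite-sum lemmas -/

lemma negMulLog_sum {ι : Type*} (s : Finset ι) (f : ι → ℝ) :
    negMulLog (∑ i ∈ s, f i) = ∑ i ∈ s, -(f i * Real.log (∑ j ∈ s, f j)) := by
  rw [negMulLog, neg_mul, Finset.sum_mul, ← Finset.sum_neg_distrib]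

section Core

variable {α β : Type*} [Fintype α] [Fintype β]

lemma core_expand (q : α → β → ℝ) :
    ((∑ a, negMulLog (∑ b, q a b)) = ∑ a, ∑ b, -(q a b * log (∑ b', q a b')))
    ∧ ((∑ b, negMulLog (∑ a, q a b)) = ∑ a, ∑ b, -(q a b * log (∑ a', q a' b)))
    ∧ (negMulLog (∑ a, ∑ b, q a b) = ∑ a, ∑ b, -(q a b * log (∑ a', ∑ b', q a' b')))
    ∧ ((∑ a, ∑ b, negMulLog (q a b)) = ∑ a, ∑ b, -(q a b * log (q a b))) := by
  refine ⟨?_, ?_, ?_, ?_⟩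
  · exact Finset.sum_congr rfl fun a _ => negMulLog_sum _ _
  · rw [Finset.sum_comm]
    exact Finset.sum_congr rfl fun a _ => negMulLog_sum _ _
  · rw [negMulLog_sum]
    refine Finset.sum_congr rfl fun a _ => ?_
    rw [Finset.sum_mul, ← Finset.sum_neg_distrib]
  · exact Finset.sum_congr rfl fun a _ => Finset.sum_congr rfl fun b _ => by
      rw [negMulLog, neg_mul]

lemma core_sumzero (q : α → β → ℝ) :
    ∑ a, ∑ b, (q a b - (∑ b', q a b') * (∑ a', q a' b) / (∑ a', ∑ b', q a' b')) = 0 := by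
  have step : ∀ a, ∑ b, ((∑ b', q a b') * (∑ a', q a' b) / (∑ a', ∑ b', q a' b'))
      = (∑ b', q a b') * (∑ a', ∑ b', q a' b') / (∑ a', ∑ b', q a' b') := by
    intro a
    rw [← Finset.sum_div, ← Finset.mul_sum]
    congr 2
    exact Finset.sum_comm
  simp only [Finset.sum_sub_distrib, step]
  rcases eq_or_ne (∑ a', ∑ b', q a' b') 0 with h | h
  · simp [h]
  · simp [mul_div_assoc, div_self h]

lemma two_ineq (q : α → β → ℝ) (hq : ∀ a b, 0 ≤ q a b) :
    (∑ a, ∑ b, negMulLog (q a b)) + negMulLog (∑ a, ∑ b, q a b) ≤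
      (∑ a, negMulLog (∑ b, q a b)) + ∑ b, negMulLog (∑ a, q a b) := by
  have hU : ∀ a, (0:ℝ) ≤ ∑ b, q a b := fun a => Finset.sum_nonneg fun b _ => hq a b
  have hV : ∀ b, (0:ℝ) ≤ ∑ a, q a b := fun b => Finset.sum_nonneg fun a _ => hq a b
  have hA : (0:ℝ) ≤ ∑ a, ∑ b, q a b := Finset.sum_nonneg fun a _ => hU a
  obtain ⟨e1, e2, e3, e4⟩ := core_expand q
  have perterm : ∀ a b,
      -(q a b * log (q a b)) + -(q a b * log (∑ a', ∑ b', q a' b'))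
        + (q a b - (∑ b', q a b') * (∑ a', q a' b) / (∑ a', ∑ b', q a' b'))
      ≤ -(q a b * log (∑ b', q a b')) + -(q a b * log (∑ a', q a' b)) := by
    intro a b
    rcases eq_or_lt_of_le (hq a b) with h0 | h0
    · rw [← h0]
      have h1 : 0 ≤ (∑ b', q a b') * (∑ a', q a' b) / (∑ a', ∑ b', q a' b') :=
        div_nonneg (mul_nonneg (hU a) (hV b)) hA
      simp only [zero_mul, neg_zero, add_zero, zero_add, zero_sub]
      linarith
    · have hu : (0:ℝ) < ∑ b', q a b' :=
        lt_of_lt_of_le h0 (Finset.single_le_sum (fun b' _ => hq a b') (Finset.mem_univ b))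
      have hv : (0:ℝ) < ∑ a', q a' b :=
        lt_of_lt_of_le h0 (Finset.single_le_sum (fun a' _ => hq a' b) (Finset.mem_univ a))
      have ht : (0:ℝ) < ∑ a', ∑ b', q a' b' :=
        lt_of_lt_of_le hu (Finset.single_le_sum (fun a' _ => hU a') (Finset.mem_univ a))
      have hlog : log ((∑ b', q a b') * (∑ a', q a' b) / (q a b * (∑ a', ∑ b', q a' b')))
          ≤ (∑ b', q a b') * (∑ a', q a' b) / (q a b * (∑ a', ∑ b', q a' b')) - 1 :=
        Real.log_le_sub_one_of_pos (by positivity)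
      have hexp : log ((∑ b', q a b') * (∑ a', q a' b) / (q a b * (∑ a', ∑ b', q a' b')))
          = log (∑ b', q a b') + log (∑ a', q a' b) - log (q a b) - log (∑ a', ∑ b', q a' b') := by
        rw [Real.log_div (by positivity) (by positivity), Real.log_mul hu.ne' hv.ne',
          Real.log_mul h0.ne' ht.ne']
        ring
      rw [hexp] at hlog
      have hmul := mul_le_mul_of_nonneg_left hlog (le_of_lt h0)
      have hsimp : q a b * ((∑ b', q a b') * (∑ a', q a' b) / (q a b * (∑ a', ∑ b', q a' b')) - 1)
          = (∑ b', q a b') * (∑ a', q a' b) / (∑ a', ∑ b', q a' b') - q a b := by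
        field_simp
      rw [hsimp] at hmul
      nlinarith [hmul]
  have key : ∑ a, ∑ b,
      (-(q a b * log (q a b)) + -(q a b * log (∑ a', ∑ b', q a' b'))
        + (q a b - (∑ b', q a b') * (∑ a', q a' b) / (∑ a', ∑ b', q a' b')))
      ≤ ∑ a, ∑ b, (-(q a b * log (∑ b', q a b')) + -(q a b * log (∑ a', q a' b))) :=
    Finset.sum_le_sum fun a _ => Finset.sum_le_sum fun b _ => perterm a b
  simp only [Finset.sum_add_distrib] at key
  have sz := core_sumzero q
  linarith [key]

lemma two_eq (q : α → β → ℝ) (hq : ∀ a b, 0 ≤ q a b)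
    (hM : ∀ a b, q a b * (∑ a', ∑ b', q a' b') = (∑ b', q a b') * (∑ a', q a' b)) :
    (∑ a, ∑ b, negMulLog (q a b)) + negMulLog (∑ a, ∑ b, q a b) =
      (∑ a, negMulLog (∑ b, q a b)) + ∑ b, negMulLog (∑ a, q a b) := by
  have hU : ∀ a, (0:ℝ) ≤ ∑ b, q a b := fun a => Finset.sum_nonneg fun b _ => hq a b
  obtain ⟨e1, e2, e3, e4⟩ := core_expand q
  rw [e1, e2, e3, e4, ← Finset.sum_add_distrib, ← Finset.sum_add_distrib]
  simp only [← Finset.sum_add_distrib]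
  refine Finset.sum_congr rfl fun a _ => Finset.sum_congr rfl fun b _ => ?_
  rcases eq_or_lt_of_le (hq a b) with h0 | h0
  · rw [← h0]; simp
  · have hu : (0:ℝ) < ∑ b', q a b' :=
      lt_of_lt_of_le h0 (Finset.single_le_sum (fun b' _ => hq a b') (Finset.mem_univ b))
    have hv : (0:ℝ) < ∑ a', q a' b :=
      lt_of_lt_of_le h0 (Finset.single_le_sum (fun a' _ => hq a' b) (Finset.mem_univ a))
    have ht : (0:ℝ) < ∑ a', ∑ b', q a' b' :=
      lt_of_lt_of_le hu (Finset.single_le_sum (fun a' _ => hU a') (Finset.mem_univ a))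
    have hlogeq : log (q a b) + log (∑ a', ∑ b', q a' b')
        = log (∑ b', q a b') + log (∑ a', q a' b) := by
      rw [← Real.log_mul h0.ne' ht.ne', ← Real.log_mul hu.ne' hv.ne', hM a b]
    linear_combination (-(q a b)) * hlogeq

end Core

/-! ### Measure-theoretic bridging lemmas -/

variable {Ω : Type*} [MeasurableSpace Ω]

lemma pr_nonneg (μ : Measure Ω) {α : Type*} (X : Ω → α) (x : α) : 0 ≤ pr μ X x :=
  ENNReal.toReal_nonneg

lemma pr_congr (μ : Measure Ω) {α α' : Type*} (X : Ω → α) (X' : Ω → α') (x : α) (x' : α')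
    (h : ∀ ω, X ω = x ↔ X' ω = x') : pr μ X x = pr μ X' x' := by
  have hs : {ω | X ω = x} = {ω | X' ω = x'} := Set.ext fun ω => h ω
  unfold pr
  rw [hs]

lemma pr_eq_toReal (μ : Measure Ω) {α : Type*} (X : Ω → α) (x : α) (s : Set Ω)
    (h : ∀ ω, X ω = x ↔ ω ∈ s) : pr μ X x = (μ s).toReal := by
  have hs : {ω | X ω = x} = s := Set.ext fun ω => h ω
  unfold pr
  rw [hs]

lemma pr_marg (μ : Measure Ω) [IsFiniteMeasure μ] {α β : Type*}
    [MeasurableSpace α] [MeasurableSingletonClass α]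
    [MeasurableSpace β] [MeasurableSingletonClass β] [Fintype β]
    {X : Ω → α} {Y : Ω → β} (hX : Measurable X) (hY : Measurable Y) (x : α) :
    pr μ X x = ∑ y : β, pr μ (fun ω => (X ω, Y ω)) (x, y) := by
  have hm : ∀ y : β, MeasurableSet {ω | (X ω, Y ω) = (x, y)} := fun y =>
    (hX.prodMk hY) (measurableSet_singleton (x, y))
  have hd : Pairwise (Function.onFun Disjoint fun y : β => {ω | (X ω, Y ω) = (x, y)}) := by
    intro y y' hyy'
    rw [Function.onFun, Set.disjoint_left]
    intro ω h1 h2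
    simp only [Set.mem_setOf_eq] at h1 h2
    rw [h1] at h2
    exact hyy' (congrArg Prod.snd h2)
  have hset : {ω | X ω = x} = ⋃ y : β, {ω | (X ω, Y ω) = (x, y)} := by
    ext ω
    simp [Prod.ext_iff]
  have : μ {ω | X ω = x} = ∑ y : β, μ {ω | (X ω, Y ω) = (x, y)} := by
    rw [hset, measure_iUnion hd hm, tsum_fintype]
  rw [pr, this, ENNReal.toReal_sum (fun y _ => measure_ne_top μ _)]
  rfl

lemma sum_pr_one (μ : Measure Ω) [IsProbabilityMeasure μ] {α : Type*}
    [MeasurableSpace α] [MeasurableSingletonClass α] [Fintype α]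
    {X : Ω → α} (hX : Measurable X) : ∑ x : α, pr μ X x = 1 := by
  have hm : ∀ x : α, MeasurableSet {ω | X ω = x} := fun x =>
    hX (measurableSet_singleton x)
  have hd : Pairwise (Function.onFun Disjoint fun x : α => {ω | X ω = x}) := by
    intro x x' hxx'
    rw [Function.onFun, Set.disjoint_left]
    intro ω h1 h2
    simp only [Set.mem_setOf_eq] at h1 h2
    exact hxx' (h1 ▸ h2)
  have huniv : (Set.univ : Set Ω) = ⋃ x : α, {ω | X ω = x} := by
    ext ω; simp
  have : (1 : ENNReal) = ∑ x : α, μ {ω | X ω = x} := by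
    rw [← measure_univ (μ := μ), huniv, measure_iUnion hd hm, tsum_fintype]
  simp only [pr]
  rw [← ENNReal.toReal_sum (fun x _ => measure_ne_top μ _), ← this, ENNReal.toReal_one]

lemma ent_comp_equiv (μ : Measure Ω) {α β : Type*} [Fintype α] [Fintype β]
    (e : α ≃ β) (X : Ω → α) :
    ent μ (fun ω => e (X ω)) = ent μ X := by
  rw [ent, ent, ← Equiv.sum_comp e (fun y => negMulLog (pr μ (fun ω => e (X ω)) y))]
  refine Finset.sum_congr rfl fun x _ => ?_
  congr 1
  exact pr_congr μ _ _ _ _ (fun ω => by simp)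

section Triple

variable {α β γ : Type*}
  [MeasurableSpace α] [MeasurableSingletonClass α] [Fintype α]
  [MeasurableSpace β] [MeasurableSingletonClass β] [Fintype β]
  [MeasurableSpace γ] [MeasurableSingletonClass γ] [Fintype γ]
  {U : Ω → α} {V : Ω → β} {T : Ω → γ}

/-- The joint distribution of `(U, V, T)` evaluated at `(a, b, c)`. -/
def qfun (μ : Measure Ω) (U : Ω → α) (V : Ω → β) (T : Ω → γ) (a : α) (b : β) (c : γ) : ℝ :=
  pr μ (fun ω => (T ω, (U ω, V ω))) (c, (a, b))

lemma qfun_nonneg (μ : Measure Ω) (a : α) (b : β) (c : γ) : 0 ≤ qfun μ U V T a b c :=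
  ENNReal.toReal_nonneg

lemma qfun_eq (μ : Measure Ω) (a : α) (b : β) (c : γ) :
    qfun μ U V T a b c = (μ {ω | T ω = c ∧ U ω = a ∧ V ω = b}).toReal :=
  pr_eq_toReal μ _ _ _ (fun ω => by simp [Prod.ext_iff])

variable (μ : Measure Ω) [IsProbabilityMeasure μ]
  (hU : Measurable U) (hV : Measurable V) (hT : Measurable T)

include hU hV hT

lemma qfun_marg_T (c : γ) :
    ∑ a : α, ∑ b : β, qfun μ U V T a b c = (μ {ω | T ω = c}).toReal := by
  simp only [qfun]
  have h := pr_marg (μ := μ) hT (hU.prodMk hV) c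
  rw [Fintype.sum_prod_type] at h
  rw [← h]
  rfl

lemma qfun_marg_V (a : α) (c : γ) :
    ∑ b : β, qfun μ U V T a b c = (μ {ω | T ω = c ∧ U ω = a}).toReal := by
  have h := pr_marg (μ := μ) (hT.prodMk hU) hV (c, a)
  have h2 : ∀ b : β, pr μ (fun ω => ((T ω, U ω), V ω)) ((c, a), b) = qfun μ U V T a b c :=
    fun b => pr_congr μ _ _ _ _ (fun ω => by simp only [Prod.mk.injEq, Set.mem_setOf_eq] <;> tauto)
  rw [← Finset.sum_congr rfl (fun b _ => h2 b), ← h]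
  exact pr_eq_toReal μ _ _ _ (fun ω => by simp [Prod.ext_iff])

lemma qfun_marg_U (b : β) (c : γ) :
    ∑ a : α, qfun μ U V T a b c = (μ {ω | T ω = c ∧ V ω = b}).toReal := by
  have h := pr_marg (μ := μ) (hT.prodMk hV) hU (c, b)
  have h2 : ∀ a : α, pr μ (fun ω => ((T ω, V ω), U ω)) ((c, b), a) = qfun μ U V T a b c :=
    fun a => pr_congr μ _ _ _ _ (fun ω => by simp only [Prod.mk.injEq, Set.mem_setOf_eq] <;> tauto)
  rw [← Finset.sum_congr rfl (fun a _ => h2 a), ← h]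
  exact pr_eq_toReal μ _ _ _ (fun ω => by simp only [Prod.mk.injEq, Set.mem_setOf_eq] <;> tauto)

lemma ent_full_eq :
    ent μ (fun ω => (U ω, (V ω, T ω))) = ∑ c : γ, ∑ a : α, ∑ b : β, negMulLog (qfun μ U V T a b c) := by
  have h1 : ent μ (fun ω => (U ω, (V ω, T ω))) = ent μ (fun ω => (T ω, (U ω, V ω))) := by
    simpa using ent_comp_equiv μ ((⟨fun p => (p.2.1, (p.2.2, p.1)), fun p => (p.2.2, (p.1, p.2.1)), fun p => rfl, fun p => rfl⟩ : γ × α × β ≃ α × β × γ)) (fun ω => (T ω, (U ω, V ω)))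
  rw [h1, ent]
  simp only [Fintype.sum_prod_type]
  rfl

lemma ent_T_eq :
    ent μ T = ∑ c : γ, negMulLog (∑ a : α, ∑ b : β, qfun μ U V T a b c) := by
  rw [ent]
  refine Finset.sum_congr rfl fun c _ => ?_
  rw [qfun_marg_T μ hU hV hT c]
  rfl

lemma ent_UT_eq :
    ent μ (fun ω => (U ω, T ω)) = ∑ c : γ, ∑ a : α, negMulLog (∑ b : β, qfun μ U V T a b c) := by
  rw [ent, Fintype.sum_prod_type, Finset.sum_comm]
  refine Finset.sum_congr rfl fun c _ => Finset.sum_congr rfl fun a _ => ?_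
  rw [qfun_marg_V μ hU hV hT a c]
  congr 1
  exact pr_eq_toReal μ _ _ _ (fun ω => by simp only [Prod.mk.injEq, Set.mem_setOf_eq] <;> tauto)

lemma ent_VT_eq :
    ent μ (fun ω => (V ω, T ω)) = ∑ c : γ, ∑ b : β, negMulLog (∑ a : α, qfun μ U V T a b c) := by
  rw [ent, Fintype.sum_prod_type, Finset.sum_comm]
  refine Finset.sum_congr rfl fun c _ => Finset.sum_congr rfl fun b _ => ?_
  rw [qfun_marg_U μ hU hV hT b c]
  congr 1
  exact pr_eq_toReal μ _ _ _ (fun ω => by simp only [Prod.mk.injEq, Set.mem_setOf_eq] <;> tauto)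

lemma condMutInfo_nonneg : 0 ≤ condMutInfo μ U V T := by
  have key : ∑ c : γ, ((∑ a : α, ∑ b : β, negMulLog (qfun μ U V T a b c))
        + negMulLog (∑ a : α, ∑ b : β, qfun μ U V T a b c))
      ≤ ∑ c : γ, ((∑ a : α, negMulLog (∑ b : β, qfun μ U V T a b c))
        + ∑ b : β, negMulLog (∑ a : α, qfun μ U V T a b c)) :=
    Finset.sum_le_sum fun c _ =>
      two_ineq (fun a b => qfun μ U V T a b c) (fun a b => qfun_nonneg μ a b c)
  simp only [Finset.sum_add_distrib] at key
  have h1 := ent_full_eq μ hU hV hT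
  have h2 := ent_T_eq μ hU hV hT
  have h3 := ent_UT_eq μ hU hV hT
  have h4 := ent_VT_eq μ hU hV hT
  simp only [condMutInfo, condEnt]
  linarith

lemma condMutInfo_eq_zero (h : CondIndepGiven μ U V T) : condMutInfo μ U V T = 0 := by
  have hM : ∀ (c : γ) (a : α) (b : β),
      qfun μ U V T a b c * (∑ a' : α, ∑ b' : β, qfun μ U V T a' b' c)
        = (∑ b' : β, qfun μ U V T a b' c) * (∑ a' : α, qfun μ U V T a' b c) := by
    intro c a b
    rw [qfun_eq μ a b c, qfun_marg_T μ hU hV hT c, qfun_marg_V μ hU hV hT a c,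
      qfun_marg_U μ hU hV hT b c, ← ENNReal.toReal_mul, ← ENNReal.toReal_mul, h c a b]
  have key : ∑ c : γ, ((∑ a : α, ∑ b : β, negMulLog (qfun μ U V T a b c))
        + negMulLog (∑ a : α, ∑ b : β, qfun μ U V T a b c))
      = ∑ c : γ, ((∑ a : α, negMulLog (∑ b : β, qfun μ U V T a b c))
        + ∑ b : β, negMulLog (∑ a : α, qfun μ U V T a b c)) :=
    Finset.sum_congr rfl fun c _ =>
      two_eq (fun a b => qfun μ U V T a b c) (fun a b => qfun_nonneg μ a b c) (hM c)
  simp only [Finset.sum_add_distrib] at key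
  have h1 := ent_full_eq μ hU hV hT
  have h2 := ent_T_eq μ hU hV hT
  have h3 := ent_UT_eq μ hU hV hT
  have h4 := ent_VT_eq μ hU hV hT
  simp only [condMutInfo, condEnt]
  linarith

end Triple

lemma mutInfo_nonneg (μ : Measure Ω) [IsProbabilityMeasure μ] {α β : Type*}
    [MeasurableSpace α] [MeasurableSingletonClass α] [Fintype α]
    [MeasurableSpace β] [MeasurableSingletonClass β] [Fintype β]
    {U : Ω → α} {V : Ω → β} (hU : Measurable U) (hV : Measurable V) :
    0 ≤ mutInfo μ U V := by
  have key := two_ineq (fun a b => pr μ (fun ω => (U ω, V ω)) (a, b))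
    (fun a b => pr_nonneg μ _ _)
  have htot : ∑ a : α, ∑ b : β, pr μ (fun ω => (U ω, V ω)) (a, b) = 1 := by
    have h := sum_pr_one μ (hU.prodMk hV)
    rw [Fintype.sum_prod_type] at h
    exact h
  rw [htot, Real.negMulLog_one] at key
  have hpair : ent μ (fun ω => (U ω, V ω))
      = ∑ a : α, ∑ b : β, negMulLog (pr μ (fun ω => (U ω, V ω)) (a, b)) := by
    rw [ent, Fintype.sum_prod_type]
  have hentU : ent μ U = ∑ a : α, negMulLog (∑ b : β, pr μ (fun ω => (U ω, V ω)) (a, b)) := by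
    rw [ent]
    exact Finset.sum_congr rfl fun a _ => by rw [pr_marg (μ := μ) hU hV a]
  have hentV : ent μ V = ∑ b : β, negMulLog (∑ a : α, pr μ (fun ω => (U ω, V ω)) (a, b)) := by
    rw [ent]
    refine Finset.sum_congr rfl fun b _ => ?_
    rw [pr_marg (μ := μ) hV hU b]
    congr 1
    exact Finset.sum_congr rfl fun a _ =>
      pr_congr μ _ _ _ _ (fun ω => by simp only [Prod.mk.injEq, Set.mem_setOf_eq] <;> tauto)
  simp only [mutInfo, condEnt]
  linarith

end IRAux

open InterferenceRelay in
/-- If the Markov chain `(Y₂, W) − X − Y₁` holds, then `I(W ; Y₁ | Y₂) ≤ I(X ; Y₁)`. -/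
theorem condMutInfo_le_mutInfo_of_condIndep
    {Ω 𝒲 A B₁ B₂ : Type*} [MeasurableSpace Ω]
    [MeasurableSpace 𝒲] [MeasurableSingletonClass 𝒲] [Fintype 𝒲]
    [MeasurableSpace A] [MeasurableSingletonClass A] [Fintype A]
    [MeasurableSpace B₁] [MeasurableSingletonClass B₁] [Fintype B₁]
    [MeasurableSpace B₂] [MeasurableSingletonClass B₂] [Fintype B₂]
    (μ : MeasureTheory.Measure Ω) [MeasureTheory.IsProbabilityMeasure μ]
    (W : Ω → 𝒲) (X : Ω → A) (Y₁ : Ω → B₁) (Y₂ : Ω → B₂)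
    (hW : Measurable W) (hX : Measurable X) (hY₁ : Measurable Y₁) (hY₂ : Measurable Y₂)
    (h : CondIndepGiven μ Y₁ (fun ω => (Y₂ ω, W ω)) X) :
    condMutInfo μ W Y₁ Y₂ ≤ mutInfo μ X Y₁ := by
  have hZ : Measurable (fun ω => (Y₂ ω, W ω)) := hY₂.prodMk hW
  have F0 : condMutInfo μ Y₁ (fun ω => (Y₂ ω, W ω)) X = 0 :=
    IRAux.condMutInfo_eq_zero μ hY₁ hZ hX h
  have F1 : 0 ≤ condMutInfo μ Y₁ X (fun ω => (Y₂ ω, W ω)) :=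
    IRAux.condMutInfo_nonneg μ hY₁ hX hZ
  have F2 : 0 ≤ mutInfo μ Y₂ Y₁ := IRAux.mutInfo_nonneg μ hY₂ hY₁
  have G1 : ent μ (fun ω => (Y₁ ω, (X ω, (Y₂ ω, W ω))))
      = ent μ (fun ω => (Y₁ ω, ((Y₂ ω, W ω), X ω))) := by
    simpa using IRAux.ent_comp_equiv μ ((⟨fun p => (p.1, (p.2.2, p.2.1)), fun p => (p.1, (p.2.2, p.2.1)), fun p => rfl, fun p => rfl⟩ : B₁ × ((B₂ × 𝒲) × A) ≃ B₁ × (A × (B₂ × 𝒲)))) (fun ω => (Y₁ ω, ((Y₂ ω, W ω), X ω)))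
  have G2 : ent μ (fun ω => (X ω, (Y₂ ω, W ω)))
      = ent μ (fun ω => ((Y₂ ω, W ω), X ω)) := by
    simpa using IRAux.ent_comp_equiv μ ((⟨fun p => (p.2, p.1), fun p => (p.2, p.1), fun p => rfl, fun p => rfl⟩ : (B₂ × 𝒲) × A ≃ A × (B₂ × 𝒲))) (fun ω => ((Y₂ ω, W ω), X ω))
  have G3 : ent μ (fun ω => (X ω, Y₁ ω)) = ent μ (fun ω => (Y₁ ω, X ω)) := by
    simpa using IRAux.ent_comp_equiv μ ((⟨fun p => (p.2, p.1), fun p => (p.2, p.1), fun p => rfl, fun p => rfl⟩ : B₁ × A ≃ A × B₁)) (fun ω => (Y₁ ω, X ω))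
  have G4 : ent μ (fun ω => (W ω, (Y₁ ω, Y₂ ω)))
      = ent μ (fun ω => (Y₁ ω, (Y₂ ω, W ω))) := by
    simpa using IRAux.ent_comp_equiv μ ((⟨fun p => (p.2.2, (p.1, p.2.1)), fun p => (p.2.1, (p.2.2, p.1)), fun p => rfl, fun p => rfl⟩ : B₁ × (B₂ × 𝒲) ≃ 𝒲 × (B₁ × B₂))) (fun ω => (Y₁ ω, (Y₂ ω, W ω)))
  have G5 : ent μ (fun ω => (W ω, Y₂ ω)) = ent μ (fun ω => (Y₂ ω, W ω)) := by
    simpa using IRAux.ent_comp_equiv μ ((⟨fun p => (p.2, p.1), fun p => (p.2, p.1), fun p => rfl, fun p => rfl⟩ : B₂ × 𝒲 ≃ 𝒲 × B₂)) (fun ω => (Y₂ ω, W ω))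
  have G6 : ent μ (fun ω => (Y₁ ω, Y₂ ω)) = ent μ (fun ω => (Y₂ ω, Y₁ ω)) := by
    simpa using IRAux.ent_comp_equiv μ ((⟨fun p => (p.2, p.1), fun p => (p.2, p.1), fun p => rfl, fun p => rfl⟩ : B₂ × B₁ ≃ B₁ × B₂)) (fun ω => (Y₂ ω, Y₁ ω))
  simp only [condMutInfo, condEnt, mutInfo] at F0 F1 F2 ⊢
  linarith

end
end

section
/- Let S and V be real numbers with S > 0 and V ≥ 0. For α ∈ ℂ define f(α) = S·(S + V + 1) / ( S·V·|1 − α|² + |α|²·V + S ). Then f(α) ≤ 1 + S for every α ∈ ℂ, with equality for α = S/(S+1); consequently sup_{α ∈ ℂ} f(α) = 1 + S. Equivalently, for every α ∈ ℂ, S·V·|1 − α|² + |α|²·V + S ≥ S·(S + V + 1)/(S + 1), with equality at α = S/(S+1). -/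
/-- Optimizing the dirty-paper-coding inflation factor: with received signal power `S > 0`
and received interference power `V ≥ 0`, the DPC rate argument
`f α = S (S + V + 1) / (S V |1 − α|² + |α|² V + S)` satisfies `f α ≤ 1 + S` for all `α ∈ ℂ`,
with equality at the Costa inflation factor `α = S / (S + 1)`; hence `⨆ α, f α = 1 + S`.
Equivalently, `S V |1 − α|² + |α|² V + S ≥ S (S + V + 1) / (S + 1)` with equality at
`α = S / (S + 1)`. -/
theorem dpc_inflation_factor_opt (S V : ℝ) (hS : 0 < S) (hV : 0 ≤ V)
    (f : ℂ → ℝ)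
    (hf : ∀ α : ℂ, f α = S * (S + V + 1) /
      (S * V * ‖1 - α‖ ^ 2 + ‖α‖ ^ 2 * V + S)) :
    (∀ α : ℂ, f α ≤ 1 + S) ∧
    f ((S / (S + 1) : ℝ) : ℂ) = 1 + S ∧
    (⨆ α : ℂ, f α) = 1 + S ∧
    (∀ α : ℂ, S * V * ‖1 - α‖ ^ 2 + ‖α‖ ^ 2 * V + S ≥
      S * (S + V + 1) / (S + 1)) ∧
    S * V * ‖1 - ((S / (S + 1) : ℝ) : ℂ)‖ ^ 2 +
        ‖((S / (S + 1) : ℝ) : ℂ)‖ ^ 2 * V + S =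
      S * (S + V + 1) / (S + 1) := by
  have hS1 : (0:ℝ) < S + 1 := by linarith
  have hkey : ∀ α : ℂ, S * V * ‖1 - α‖ ^ 2 + ‖α‖ ^ 2 * V + S ≥
      S * (S + V + 1) / (S + 1) := by
    intro α
    have h1 : ‖1 - α‖ ^ 2 = (1 - α.re)^2 + α.im^2 := by
      rw [Complex.sq_norm, Complex.normSq_apply]
      simp [Complex.sub_re, Complex.sub_im]
      ring
    have h2 : ‖α‖ ^ 2 = α.re^2 + α.im^2 := by
      rw [Complex.sq_norm, Complex.normSq_apply]; ring
    rw [h1, h2, ge_iff_le, div_le_iff₀ hS1]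
    nlinarith [mul_nonneg hV (sq_nonneg ((S+1) * α.re - S)),
      mul_nonneg hV (sq_nonneg α.im), mul_nonneg (mul_nonneg hS.le hV) (sq_nonneg α.im),
      sq_nonneg α.im]
  have hpos : ∀ α : ℂ, 0 < S * V * ‖1 - α‖ ^ 2 + ‖α‖ ^ 2 * V + S := by
    intro α
    have := hkey α
    have : (0:ℝ) < S * (S + V + 1) / (S + 1) := by positivity
    linarith [hkey α]
  have hle : ∀ α : ℂ, f α ≤ 1 + S := by
    intro α
    rw [hf α, div_le_iff₀ (hpos α)]
    have := hkey α
    rw [ge_iff_le, div_le_iff₀ hS1] at this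
    nlinarith [hkey α, mul_le_mul_of_nonneg_left this (by linarith : (0:ℝ) ≤ 1)]
  have habs : ‖((S / (S + 1) : ℝ) : ℂ)‖ = S / (S + 1) := by
    rw [Complex.norm_real, Real.norm_eq_abs, abs_of_pos (by positivity)]
  have habs2 : ‖1 - ((S / (S + 1) : ℝ) : ℂ)‖ = 1 / (S + 1) := by
    have : (1 : ℂ) - ((S / (S + 1) : ℝ) : ℂ) = ((1 - S / (S + 1) : ℝ) : ℂ) := by
      push_cast; ring
    rw [this, Complex.norm_real, Real.norm_eq_abs, abs_of_pos]
    · field_simp; ring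
    · rw [sub_pos, div_lt_one hS1]; linarith
  have heqd : S * V * ‖1 - ((S / (S + 1) : ℝ) : ℂ)‖ ^ 2 +
        ‖((S / (S + 1) : ℝ) : ℂ)‖ ^ 2 * V + S =
      S * (S + V + 1) / (S + 1) := by
    rw [habs, habs2]
    field_simp
    ring
  have heq : f ((S / (S + 1) : ℝ) : ℂ) = 1 + S := by
    rw [hf, heqd]
    rw [div_eq_iff (by positivity : S * (S + V + 1) / (S + 1) ≠ 0)]
    field_simp
    ring
  refine ⟨hle, heq, ?_, hkey, heqd⟩
  have hb : BddAbove (Set.range f) := ⟨1 + S, by rintro _ ⟨α, rfl⟩; exact hle α⟩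
  exact le_antisymm (ciSup_le hle) (heq ▸ le_ciSup hb _)
end
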